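/- (Characterization C0 of GLS.) A formula φ is a theorem of the Hilbert system GLS if and only if for every GL-model ⟨W,R,V⟩ and every world w ∈ W that is SF(φ)-reflexive (i.e., V(w, □α → α)=true for every subformula of φ of the form □α), V(w, φ) = true. -/

import Mathlib

/-- Modal formulas: propositional variables, ⊥, →, □. -/
inductive Formula : Type
  | var : ℕ → Formula
  | bot : Formula
  | imp : Formula → Formula → Formula
  | box : Formula → Formula
deriving DecidableEq

/-- Levels of sequents in GLS_seq: first level (⇒) and second level (⇛). -/
inductive SeqLevel : Type
  | one
  | two
deriving DecidableEq

/-- The set of subformulas of a formula. -/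
def Formula.subf : Formula → Finset Formula
  | .var p => {.var p}
  | .bot => {.bot}
  | .imp φ ψ => insert (.imp φ ψ) (φ.subf ∪ ψ.subf)
  | .box φ => insert (.box φ) φ.subf

/-- SF(Ψ,Φ): all subformulas of formulas in Ψ ∪ Φ. -/
def SF (Ψ Φ : Finset Formula) : Finset Formula := (Ψ ∪ Φ).biUnion Formula.subf

def Formula.isBox : Formula → Bool
  | .box _ => true
  | _ => false

def Formula.unbox : Formula → Formula
  | .box φ => φ
  | φ => φ

/-- Θ_□ = {φ : □φ ∈ Θ}. -/
def boxInv (Θ : Finset Formula) : Finset Formula :=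
  (Θ.filter fun ψ => ψ.isBox).image Formula.unbox

/-- The sequent calculus GLS_seq, on sequents of two levels.  The Bool parameter
records whether the cut rule may be used: `GLSSeq true` is provability in GLS_seq,
`GLSSeq false` is cut-free provability.  The first-level fragment is exactly GL_seq. -/
inductive GLSSeq : Bool → SeqLevel → Finset Formula → Finset Formula → Prop
  | init (c lv φ) : GLSSeq c lv {φ} {φ}
  | initBot (c lv) : GLSSeq c lv {Formula.bot} ∅
  | cut {lv Γ Δ} (φ) : GLSSeq true lv Γ (insert φ Δ) → GLSSeq true lv (insert φ Γ) Δ →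
      GLSSeq true lv Γ Δ
  | weak {c lv Γ Δ Γ' Δ'} : Γ ⊆ Γ' → Δ ⊆ Δ' → GLSSeq c lv Γ Δ → GLSSeq c lv Γ' Δ'
  | impL {c lv Γ Δ φ ψ} : GLSSeq c lv Γ (insert φ Δ) → GLSSeq c lv (insert ψ Γ) Δ →
      GLSSeq c lv (insert (.imp φ ψ) Γ) Δ
  | impR {c lv Γ Δ φ ψ} : GLSSeq c lv (insert φ Γ) (insert ψ Δ) →
      GLSSeq c lv Γ (insert (.imp φ ψ) Δ)
  | boxGL {c Γ φ} : GLSSeq c .one (Γ ∪ Γ.image .box ∪ {.box φ}) {φ} →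
      GLSSeq c .one (Γ.image .box) {.box φ}
  | boxL {c Γ Δ} (φ) : GLSSeq c .two (insert φ Γ) Δ → GLSSeq c .two (insert (.box φ) Γ) Δ
  | lift {c Γ Δ} : GLSSeq c .one Γ Δ → GLSSeq c .two Γ Δ

/-- The sequent calculus GL_seq (on first-level sequents only). -/
inductive GLSeq : Bool → Finset Formula → Finset Formula → Prop
  | init (c φ) : GLSeq c {φ} {φ}
  | initBot (c) : GLSeq c {Formula.bot} ∅
  | cut {Γ Δ} (φ) : GLSeq true Γ (insert φ Δ) → GLSeq true (insert φ Γ) Δ → GLSeq true Γ Δ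
  | weak {c Γ Δ Γ' Δ'} : Γ ⊆ Γ' → Δ ⊆ Δ' → GLSeq c Γ Δ → GLSeq c Γ' Δ'
  | impL {c Γ Δ φ ψ} : GLSeq c Γ (insert φ Δ) → GLSeq c (insert ψ Γ) Δ →
      GLSeq c (insert (.imp φ ψ) Γ) Δ
  | impR {c Γ Δ φ ψ} : GLSeq c (insert φ Γ) (insert ψ Δ) → GLSeq c Γ (insert (.imp φ ψ) Δ)
  | boxGL {c Γ φ} : GLSeq c (Γ ∪ Γ.image .box ∪ {.box φ}) {φ} → GLSeq c (Γ.image .box) {.box φ}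

/-- Proof trees of GLS_seq (cut included). -/
inductive GLSTree : SeqLevel → Finset Formula → Finset Formula → Type
  | init (lv φ) : GLSTree lv {φ} {φ}
  | initBot (lv) : GLSTree lv {Formula.bot} ∅
  | cut {lv Γ Δ} (φ) : GLSTree lv Γ (insert φ Δ) → GLSTree lv (insert φ Γ) Δ → GLSTree lv Γ Δ
  | weak {lv Γ Δ} (Γ' Δ' : Finset Formula) : Γ ⊆ Γ' → Δ ⊆ Δ' → GLSTree lv Γ Δ → GLSTree lv Γ' Δ'
  | impL {lv Γ Δ} (φ ψ) : GLSTree lv Γ (insert φ Δ) → GLSTree lv (insert ψ Γ) Δ →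
      GLSTree lv (insert (.imp φ ψ) Γ) Δ
  | impR {lv Γ Δ} (φ ψ) : GLSTree lv (insert φ Γ) (insert ψ Δ) → GLSTree lv Γ (insert (.imp φ ψ) Δ)
  | boxGL (Γ φ) : GLSTree .one (Γ ∪ Γ.image .box ∪ {.box φ}) {φ} → GLSTree .one (Γ.image .box) {.box φ}
  | boxL {Γ Δ} (φ) : GLSTree .two (insert φ Γ) Δ → GLSTree .two (insert (.box φ) Γ) Δ
  | lift {Γ Δ} : GLSTree .one Γ Δ → GLSTree .two Γ Δ

/-- The set of principal formulas of all (□L) rules occurring in a proof tree. -/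
def GLSTree.principals : ∀ {lv Γ Δ}, GLSTree lv Γ Δ → Finset Formula
  | _, _, _, .init _ _ => ∅
  | _, _, _, .initBot _ => ∅
  | _, _, _, .cut _ t₁ t₂ => t₁.principals ∪ t₂.principals
  | _, _, _, .weak _ _ _ _ t => t.principals
  | _, _, _, .impL _ _ t₁ t₂ => t₁.principals ∪ t₂.principals
  | _, _, _, .impR _ _ t => t.principals
  | _, _, _, .boxGL _ _ t => t.principals
  | _, _, _, .boxL φ t => insert (Formula.box φ) t.principals
  | _, _, _, .lift t => t.principals

/-- A proof tree bundled with its level and conclusion. -/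
abbrev PGLSTree : Type :=
  (lv : SeqLevel) × (Γ : Finset Formula) × (Δ : Finset Formula) × GLSTree lv Γ Δ

/-- The set of subproofs of a proof tree (including the tree itself). -/
def GLSTree.subproofs {lv Γ Δ} (t : GLSTree lv Γ Δ) : Set PGLSTree :=
  insert ⟨lv, Γ, Δ, t⟩ <|
    match lv, Γ, Δ, t with
    | _, _, _, .init _ _ => ∅
    | _, _, _, .initBot _ => ∅
    | _, _, _, .cut _ t₁ t₂ => t₁.subproofs ∪ t₂.subproofs
    | _, _, _, .weak _ _ _ _ t₁ => t₁.subproofs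
    | _, _, _, .impL _ _ t₁ t₂ => t₁.subproofs ∪ t₂.subproofs
    | _, _, _, .impR _ _ t₁ => t₁.subproofs
    | _, _, _, .boxGL _ _ t₁ => t₁.subproofs
    | _, _, _, .boxL _ t₁ => t₁.subproofs
    | _, _, _, .lift t₁ => t₁.subproofs

/-- Kripke satisfaction over a frame `R` with atomic valuation `v`. -/
def KSat {W : Type} (R : W → W → Prop) (v : W → ℕ → Prop) : Formula → W → Prop
  | .var p, w => v w p
  | .bot, _ => False
  | .imp φ ψ, w => KSat R v φ w → KSat R v ψ w
  | .box φ, w => ∀ w', R w w' → KSat R v φ w'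

/-- A GL-model: a nonempty, transitive, converse well-founded Kripke model. -/
structure GLModel where
  World : Type
  ne : Nonempty World
  R : World → World → Prop
  trans : Transitive R
  cwf : ∀ f : ℕ → World, ¬ ∀ i, R (f i) (f (i + 1))
  val : World → ℕ → Prop

/-- Truth of a formula at a world of a GL-model. -/
def GLModel.sat (M : GLModel) (w : M.World) (φ : Formula) : Prop := KSat M.R M.val φ w

/-- Truth of a sequent Γ ▸ Δ at a world: some γ ∈ Γ is false or some δ ∈ Δ is true. -/
def GLModel.seqTrue (M : GLModel) (w : M.World) (Γ Δ : Finset Formula) : Prop :=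
  (∃ γ ∈ Γ, ¬ M.sat w γ) ∨ (∃ δ ∈ Δ, M.sat w δ)

/-- w is Σ-reflexive: □α → α is true at w for every □α ∈ Σ. -/
def GLModel.reflexiveFor (M : GLModel) (w : M.World) (S : Finset Formula) : Prop :=
  ∀ α : Formula, Formula.box α ∈ S → M.sat w ((Formula.box α).imp α)

/-- Saturation conditions (→L), (→R) for first-level sequents. -/
def Saturated1 (Γ Δ : Finset Formula) : Prop :=
  (∀ φ ψ : Formula, φ.imp ψ ∈ Γ → φ ∈ Δ ∨ ψ ∈ Γ) ∧
  (∀ φ ψ : Formula, φ.imp ψ ∈ Δ → φ ∈ Γ ∧ ψ ∈ Δ)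

/-- Saturation for second-level sequents: additionally (□L). -/
def Saturated2 (Γ Δ : Finset Formula) : Prop :=
  Saturated1 Γ Δ ∧ ∀ φ : Formula, Formula.box φ ∈ Γ → φ ∈ Γ

def Saturated : SeqLevel → Finset Formula → Finset Formula → Prop
  | .one => Saturated1
  | .two => Saturated2

/-- The Hilbert system GL. -/
inductive GLHilbert : Formula → Prop
  | ax1 (φ ψ : Formula) : GLHilbert (φ.imp (ψ.imp φ))
  | ax2 (φ ψ χ : Formula) :
      GLHilbert ((φ.imp (ψ.imp χ)).imp ((φ.imp ψ).imp (φ.imp χ)))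
  | ax3 (φ : Formula) : GLHilbert (((φ.imp .bot).imp .bot).imp φ)
  | axK (φ ψ : Formula) :
      GLHilbert ((Formula.box (φ.imp ψ)).imp ((Formula.box φ).imp (Formula.box ψ)))
  | axLob (φ : Formula) :
      GLHilbert ((Formula.box ((Formula.box φ).imp φ)).imp (Formula.box φ))
  | mp {φ ψ} : GLHilbert (φ.imp ψ) → GLHilbert φ → GLHilbert ψ
  | nec {φ} : GLHilbert φ → GLHilbert (Formula.box φ)

/-- The Hilbert system GLS: theorems of GL and all □α → α, closed under modus ponens. -/
inductive GLSHilbert : Formula → Prop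
  | gl {φ} : GLHilbert φ → GLSHilbert φ
  | refl (α : Formula) : GLSHilbert ((Formula.box α).imp α)
  | mp {φ ψ} : GLSHilbert (φ.imp ψ) → GLSHilbert φ → GLSHilbert ψ

/-- Conjunction (encoded with → and ⊥) of a list of formulas; empty conjunction is ⊤. -/
def Formula.conj : List Formula → Formula
  | [] => Formula.bot.imp Formula.bot
  | φ :: l => ((φ.imp ((Formula.conj l).imp .bot)).imp .bot)

/-- Membership predicate for the canonical model: saturated first-level sequents over S
that are not cut-free provable in GLS_seq. -/
def W0pred (S : Finset Formula) (s : Finset Formula × Finset Formula) : Prop :=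
  Saturated1 s.1 s.2 ∧ ¬ GLSSeq false SeqLevel.one s.1 s.2 ∧ s.1 ∪ s.2 ⊆ S

/-- Worlds of the canonical model. -/
def W0 (S : Finset Formula) : Type := {s : Finset Formula × Finset Formula // W0pred S s}

/-- Accessibility of the canonical model: (Γ⇒Δ) R₀ (Γ'⇒Δ') iff Γ_□ ⊊ Γ'_□ and Γ_□ ⊆ Γ'. -/
def R0 (S : Finset Formula) (s t : W0 S) : Prop :=
  boxInv s.1.1 ⊂ boxInv t.1.1 ∧ boxInv s.1.1 ⊆ t.1.1

/-- Valuation of the canonical model: p is true at (Γ⇒Δ) iff p ∈ Γ. -/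
def V0 (S : Finset Formula) (s : W0 S) (p : ℕ) : Prop := Formula.var p ∈ s.1.1

/-- The extended set of worlds W = W₀ ∪ ℕ. -/
def Wext (S : Finset Formula) : Type := W0 S ⊕ ℕ

/-- The extended accessibility relation, with distinguished world `wp` in W₀. -/
def Rext (S : Finset Formula) (wp : W0 S) : Wext S → Wext S → Prop
  | Sum.inl x, Sum.inl y => R0 S x y
  | Sum.inr _, Sum.inl y => y = wp ∨ R0 S wp y
  | Sum.inr n, Sum.inr m => m < n
  | Sum.inl _, Sum.inr _ => False

/-- The extended valuation: worlds in ℕ behave like the distinguished world `wp`. -/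
def Vext (S : Finset Formula) (wp : W0 S) : Wext S → ℕ → Prop
  | Sum.inl x, p => V0 S x p
  | Sum.inr _, p => V0 S wp p
namespace C0proof
open Formula

/-- Derivability from a finite set of hypotheses over GL. -/
inductive Deriv (Γ : Finset Formula) : Formula → Prop
  | thm {φ} : GLHilbert φ → Deriv Γ φ
  | hyp {φ} : φ ∈ Γ → Deriv Γ φ
  | mp {φ ψ} : Deriv Γ (φ.imp ψ) → Deriv Γ φ → Deriv Γ ψ

theorem Deriv.mono {Γ Γ' : Finset Formula} {t} (h : Deriv Γ t) (hs : Γ ⊆ Γ') : Deriv Γ' t := by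
  induction h with
  | thm h => exact .thm h
  | hyp h => exact .hyp (hs h)
  | mp _ _ ih1 ih2 => exact .mp ih1 ih2

theorem idThm (a : Formula) : GLHilbert (a.imp a) :=
  .mp (.mp (.ax2 a (a.imp a) a) (.ax1 a (a.imp a))) (.ax1 a a)

theorem Deriv.deduct {Γ : Finset Formula} {t} (h : Deriv Γ t) (a : Formula) :
    Deriv (Γ.erase a) (a.imp t) := by
  induction h with
  | thm h => exact .mp (.thm (.ax1 _ _)) (.thm h)
  | @hyp φ h =>
    by_cases he : φ = a
    · subst he; exact .thm (idThm φ)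
    · exact .mp (.thm (.ax1 _ _)) (.hyp (Finset.mem_erase.2 ⟨he, h⟩))
  | @mp φ ψ _ _ ih1 ih2 => exact .mp (.mp (.thm (.ax2 a φ ψ)) ih1) ih2

theorem deductInsert {Γ : Finset Formula} {a t} (h : Deriv (insert a Γ) t) :
    Deriv Γ (a.imp t) := by
  refine (h.deduct a).mono ?_
  intro x hx
  rcases Finset.mem_erase.1 hx with ⟨hne, hx⟩
  rcases Finset.mem_insert.1 hx with h | h
  · exact absurd h hne
  · exact h

theorem derivEmpty {t} (h : Deriv ∅ t) : GLHilbert t := by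
  induction h with
  | thm h => exact h
  | hyp h => simp at h
  | mp _ _ ih1 ih2 => exact .mp ih1 ih2

/-- Implication chain. -/
def impChain (L : List Formula) (t : Formula) : Formula := L.foldr .imp t

theorem applyChainD {Γ : Finset Formula} :
    ∀ (L : List Formula) (t), Deriv Γ (impChain L t) → (∀ x ∈ L, Deriv Γ x) → Deriv Γ t
  | [], _, h, _ => h
  | x :: L, t, h, hx =>
    applyChainD L t (Deriv.mp h (hx x (by simp))) (fun y hy => hx y (by simp [hy]))

theorem thmChainSwap : ∀ (L : List Formula) (x t : Formula),
    GLHilbert ((impChain L (x.imp t)).imp (x.imp (impChain L t)))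
  | [], x, t => idThm _
  | y :: L, x, t => by
    have ih := thmChainSwap L x t
    have h0 : Deriv (insert y (insert x {y.imp (impChain L (x.imp t))}))
        (impChain L t) := by
      have hy1 : Deriv (insert y (insert x {y.imp (impChain L (x.imp t))}))
          (y.imp (impChain L (x.imp t))) := .hyp (by simp)
      have hy2 : Deriv (insert y (insert x {y.imp (impChain L (x.imp t))})) y := .hyp (by simp)
      have hx1 : Deriv (insert y (insert x {y.imp (impChain L (x.imp t))})) x := .hyp (by simp)
      exact .mp (.mp (.thm ih) (.mp hy1 hy2)) hx1
    have h1 := deductInsert h0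
    have h2 := deductInsert h1
    have h3 : Deriv (insert (y.imp (impChain L (x.imp t))) ∅)
        (x.imp (y.imp (impChain L t))) := h2.mono (by simp)
    exact derivEmpty (deductInsert h3)

theorem derivImpChain : ∀ (L : List Formula) (t), Deriv L.toFinset t → GLHilbert (impChain L t)
  | [], t, h => derivEmpty (by simpa [impChain] using h)
  | x :: L, t, h => by
    have h1 : Deriv (insert x L.toFinset) t := by simpa using h
    have h3 := derivImpChain L (x.imp t) (deductInsert h1)
    exact .mp (thmChainSwap L x t) h3

theorem boxDist : ∀ (L : List Formula) (t : Formula),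
    GLHilbert ((Formula.box (impChain L t)).imp (impChain (L.map .box) (.box t)))
  | [], t => idThm _
  | x :: L, t => by
    have ih := boxDist L t
    have h : Deriv (insert (Formula.box x) {Formula.box (x.imp (impChain L t))})
        (impChain (L.map .box) (.box t)) := by
      have hc : Deriv (insert (Formula.box x) {Formula.box (x.imp (impChain L t))})
          (Formula.box (impChain L t)) :=
        .mp (.mp (.thm (.axK x (impChain L t))) (.hyp (by simp))) (.hyp (by simp))
      exact .mp (.thm ih) hc
    have h2 : Deriv (insert (Formula.box (x.imp (impChain L t))) ∅)
        ((Formula.box x).imp (impChain (L.map .box) (.box t))) :=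
      (deductInsert h).mono (by simp)
    exact derivEmpty (deductInsert h2)

theorem boxedChain {L : List Formula} {t} (h : GLHilbert (impChain L t)) :
    GLHilbert (impChain (L.map .box) (.box t)) :=
  .mp (boxDist L t) (.nec h)

/-- Ex falso. -/
theorem efq (b : Formula) : GLHilbert (Formula.bot.imp b) := by
  have h : Deriv (insert Formula.bot ∅) b :=
    .mp (.thm (.ax3 b)) (.mp (.thm (.ax1 .bot (b.imp .bot))) (.hyp (by simp)))
  exact derivEmpty (deductInsert h)

theorem derivEfq {Γ : Finset Formula} {b} (h : Deriv Γ .bot) : Deriv Γ b :=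
  .mp (.thm (efq b)) h


theorem deductSingleton {a t : Formula} (h : Deriv {a} t) : GLHilbert (a.imp t) :=
  derivEmpty ((h.deduct a).mono (by simp))

theorem glComp {a b c : Formula} (h1 : GLHilbert (a.imp b)) (h2 : GLHilbert (b.imp c)) :
    GLHilbert (a.imp c) := by
  have h : Deriv {a} c := .mp (.thm h2) (.mp (.thm h1) (.hyp (by simp)))
  exact deductSingleton h

theorem boxMono {a b : Formula} (h : GLHilbert (a.imp b)) :
    GLHilbert ((Formula.box a).imp (Formula.box b)) :=
  .mp (.axK a b) (.nec h)

/-- Encoded conjunction. -/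
def Fand (a b : Formula) : Formula := (a.imp (b.imp .bot)).imp .bot

theorem andIntro (a b : Formula) : GLHilbert (a.imp (b.imp (Fand a b))) := by
  have h : Deriv (insert (a.imp (b.imp .bot)) (insert b {a})) Formula.bot := by
    have h1 : Deriv (insert (a.imp (b.imp .bot)) (insert b {a})) (a.imp (b.imp .bot)) :=
      .hyp (by simp)
    have h2 : Deriv (insert (a.imp (b.imp .bot)) (insert b {a})) a := .hyp (by simp)
    have h3 : Deriv (insert (a.imp (b.imp .bot)) (insert b {a})) b := .hyp (by simp)
    exact .mp (.mp h1 h2) h3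
  exact deductSingleton (deductInsert (deductInsert h))

theorem andE1 (a b : Formula) : GLHilbert ((Fand a b).imp a) := by
  have h1 : Deriv (insert a (insert (a.imp .bot) {Fand a b})) Formula.bot := by
    have ha : Deriv (insert a (insert (a.imp .bot) {Fand a b})) a := .hyp (by simp)
    have hna : Deriv (insert a (insert (a.imp .bot) {Fand a b})) (a.imp .bot) := .hyp (by simp)
    exact .mp hna ha
  have h3 : Deriv (insert (a.imp .bot) {Fand a b}) (a.imp (b.imp .bot)) :=
    deductInsert (derivEfq h1)
  have hfand : Deriv (insert (a.imp .bot) {Fand a b}) (Fand a b) := .hyp (by simp)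
  have h4 : Deriv (insert (a.imp .bot) {Fand a b}) Formula.bot := .mp hfand h3
  have h6 : Deriv {Fand a b} a := .mp (.thm (.ax3 a)) (deductInsert h4)
  exact deductSingleton h6

theorem andE2 (a b : Formula) : GLHilbert ((Fand a b).imp b) := by
  have h1 : Deriv (insert (b.imp .bot) {Fand a b}) (a.imp (b.imp .bot)) :=
    .mp (.thm (.ax1 (b.imp .bot) a)) (.hyp (by simp))
  have hfand : Deriv (insert (b.imp .bot) {Fand a b}) (Fand a b) := .hyp (by simp)
  have h2 : Deriv (insert (b.imp .bot) {Fand a b}) Formula.bot := .mp hfand h1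
  have h3 : Deriv {Fand a b} b := .mp (.thm (.ax3 b)) (deductInsert h2)
  exact deductSingleton h3

/-- The transitivity axiom 4 is derivable in GL. -/
theorem fourThm (A : Formula) : GLHilbert ((Formula.box A).imp (Formula.box (Formula.box A))) := by
  set C := Fand A (Formula.box A) with hC
  have b1 : GLHilbert ((Formula.box C).imp (Formula.box A)) := boxMono (andE1 A (Formula.box A))
  have b2 : GLHilbert ((Formula.box C).imp (Formula.box (Formula.box A))) :=
    boxMono (andE2 A (Formula.box A))
  have step : GLHilbert (A.imp ((Formula.box C).imp C)) := by
    have hA : Deriv (insert (Formula.box C) {A}) A := .hyp (by simp)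
    have hbC : Deriv (insert (Formula.box C) {A}) (Formula.box C) := .hyp (by simp)
    have hbA : Deriv (insert (Formula.box C) {A}) (Formula.box A) := .mp (.thm b1) hbC
    have hc : Deriv (insert (Formula.box C) {A}) C :=
      .mp (.mp (.thm (andIntro A (Formula.box A))) hA) hbA
    exact deductSingleton (deductInsert hc)
  have lobstep : GLHilbert ((Formula.box A).imp (Formula.box ((Formula.box C).imp C))) :=
    boxMono step
  exact glComp (glComp lobstep (.axLob C)) b2


theorem mem_subf_self : ∀ φ : Formula, φ ∈ φ.subf
  | .var p => by simp [Formula.subf]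
  | .bot => by simp [Formula.subf]
  | .imp a b => by simp [Formula.subf]
  | .box a => by simp [Formula.subf]

theorem subf_trans : ∀ φ ψ : Formula, ψ ∈ φ.subf → ψ.subf ⊆ φ.subf := by
  intro φ
  induction φ with
  | var p => intro ψ h; simp [Formula.subf] at h; subst h; exact fun x hx => hx
  | bot => intro ψ h; simp [Formula.subf] at h; subst h; exact fun x hx => hx
  | imp a b iha ihb =>
    intro ψ h
    rw [Formula.subf] at h
    rcases Finset.mem_insert.1 h with h | h
    · subst h; exact fun x hx => hx
    · rcases Finset.mem_union.1 h with h | h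
      · exact fun x hx => by
          rw [Formula.subf]; exact Finset.mem_insert.2 (Or.inr (Finset.mem_union.2 (Or.inl (iha ψ h hx))))
      · exact fun x hx => by
          rw [Formula.subf]; exact Finset.mem_insert.2 (Or.inr (Finset.mem_union.2 (Or.inr (ihb ψ h hx))))
  | box a iha =>
    intro ψ h
    rw [Formula.subf] at h
    rcases Finset.mem_insert.1 h with h | h
    · subst h; exact fun x hx => hx
    · exact fun x hx => by
        rw [Formula.subf]; exact Finset.mem_insert.2 (Or.inr (iha ψ h hx))

/-- Soundness of GL with respect to GL-models. -/
theorem glSound {φ : Formula} (h : GLHilbert φ) (M : GLModel) (w : M.World) : M.sat w φ := by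
  induction h generalizing w with
  | ax1 a b => intro h1 _; exact h1
  | ax2 a b c => intro h1 h2 h3; exact h1 h3 (h2 h3)
  | ax3 a =>
    intro h1
    by_contra hb
    exact h1 hb
  | axK a b => intro h1 h2 w' hr; exact h1 w' hr (h2 w' hr)
  | axLob A =>
    intro h1
    by_contra hb
    have hex : ∃ w1, M.R w w1 ∧ ¬ KSat M.R M.val A w1 := by
      by_contra h2
      push_neg at h2
      exact hb (fun w' hr => h2 w' hr)
    obtain ⟨w1, hr1, hA1⟩ := hex
    have step : ∀ x : {x : M.World // M.R w x ∧ ¬ KSat M.R M.val A x},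
        ∃ y : {x : M.World // M.R w x ∧ ¬ KSat M.R M.val A x}, M.R x.1 y.1 := by
      rintro ⟨x, hx, hAx⟩
      have h2 : KSat M.R M.val ((Formula.box A).imp A) x := h1 x hx
      have h3 : ¬ KSat M.R M.val (Formula.box A) x := fun hb2 => hAx (h2 hb2)
      have h4 : ∃ y, M.R x y ∧ ¬ KSat M.R M.val A y := by
        by_contra h5
        push_neg at h5
        exact h3 (fun y hy => h5 y hy)
      obtain ⟨y, hy, hAy⟩ := h4
      exact ⟨⟨y, M.trans hx hy, hAy⟩, hy⟩
    let g : {x : M.World // M.R w x ∧ ¬ KSat M.R M.val A x} →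
        {x : M.World // M.R w x ∧ ¬ KSat M.R M.val A x} := fun x => (step x).choose
    have hg : ∀ x, M.R x.1 (g x).1 := fun x => (step x).choose_spec
    let f : ℕ → {x : M.World // M.R w x ∧ ¬ KSat M.R M.val A x} :=
      fun n => g^[n] ⟨w1, hr1, hA1⟩
    have hchain : ∀ i, M.R (f i).1 (f (i + 1)).1 := by
      intro i
      have : f (i + 1) = g (f i) := Function.iterate_succ_apply' g i _
      rw [this]
      exact hg (f i)
    exact M.cwf (fun n => (f n).1) hchain
  | mp _ _ ih1 ih2 => exact ih1 w (ih2 w)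
  | nec _ ih => intro w' _; exact ih w'

/-- Soundness of derivations from hypotheses. -/
theorem derivSound {Γ : Finset Formula} {t} (h : Deriv Γ t) (M : GLModel) (w : M.World)
    (hΓ : ∀ γ ∈ Γ, M.sat w γ) : M.sat w t := by
  induction h with
  | thm h => exact glSound h M w
  | hyp h => exact hΓ _ h
  | mp _ _ ih1 ih2 => exact ih1 ih2

/-- Every GLS theorem is derivable in GL from finitely many reflexivity hypotheses. -/
theorem glsExtract {φ : Formula} (h : GLSHilbert φ) :
    ∃ Γ : Finset Formula, (∀ x ∈ Γ, ∃ α, x = (Formula.box α).imp α) ∧ Deriv Γ φ := by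
  induction h with
  | gl h => exact ⟨∅, by simp, .thm h⟩
  | refl α => exact ⟨{(Formula.box α).imp α}, by simp, .hyp (by simp)⟩
  | mp _ _ ih1 ih2 =>
    obtain ⟨Γ1, h1, d1⟩ := ih1
    obtain ⟨Γ2, h2, d2⟩ := ih2
    refine ⟨Γ1 ∪ Γ2, ?_, .mp (d1.mono Finset.subset_union_left) (d2.mono Finset.subset_union_right)⟩
    intro x hx
    rcases Finset.mem_union.1 hx with hx | hx
    · exact h1 x hx
    · exact h2 x hx

/-- Derivations from GLS-provable hypotheses give GLS theorems. -/
theorem glsOfDeriv {Γ : Finset Formula} {t} (h : Deriv Γ t) (hΓ : ∀ x ∈ Γ, GLSHilbert x) :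
    GLSHilbert t := by
  induction h with
  | thm h => exact .gl h
  | hyp h => exact hΓ _ h
  | mp _ _ ih1 ih2 => exact .mp ih1 ih2


section Extension

variable (M : GLModel) (w : M.World)

/-- Accessibility of the extended model. -/
def MR : (M.World ⊕ ℕ) → (M.World ⊕ ℕ) → Prop
  | .inl x, .inl y => M.R x y
  | .inr _, .inl y => y = w ∨ M.R w y
  | .inr n, .inr m => m < n
  | .inl _, .inr _ => False

/-- Valuation of the extended model. -/
def MV : (M.World ⊕ ℕ) → ℕ → Prop
  | .inl x, p => M.val x p
  | .inr _, p => M.val w p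

theorem MR_trans : Transitive (MR M w) := by
  rintro (a | a) (b | b) (c | c) hab hbc
  · exact M.trans hab hbc
  · exact hbc.elim
  · exact hab.elim
  · exact hab.elim
  · rcases hab with h | h
    · subst h; exact Or.inr hbc
    · exact Or.inr (M.trans h hbc)
  · exact hbc.elim
  · exact hbc
  · exact lt_trans hbc hab

theorem MR_cwf : ∀ f : ℕ → M.World ⊕ ℕ, ¬ ∀ i, MR M w (f i) (f (i + 1)) := by
  intro f hchain
  by_cases h : ∃ i x, f i = .inl x
  · obtain ⟨i, x, hi⟩ := h
    have key : ∀ k, ∃ y, f (i + k) = .inl y := by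
      intro k
      induction k with
      | zero => exact ⟨x, hi⟩
      | succ k ih =>
        obtain ⟨y, hy⟩ := ih
        have hc := hchain (i + k)
        rw [hy] at hc
        rcases hz : f (i + k + 1) with z | z
        · exact ⟨z, rfl⟩
        · rw [hz] at hc; exact hc.elim
    let g : ℕ → M.World := fun k => (key k).choose
    have hg : ∀ k, f (i + k) = .inl (g k) := fun k => (key k).choose_spec
    refine M.cwf g (fun k => ?_)
    have hc := hchain (i + k)
    rw [hg k, show i + k + 1 = i + (k + 1) by ring, hg (k + 1)] at hc
    exact hc
  · push_neg at h
    have key : ∀ i, ∃ m, f i = .inr m := by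
      intro i
      rcases hz : f i with z | z
      · exact absurd hz (h i z)
      · exact ⟨z, rfl⟩
    let g : ℕ → ℕ := fun i => (key i).choose
    have hg : ∀ i, f i = .inr (g i) := fun i => (key i).choose_spec
    have hdec : ∀ i, g (i + 1) < g i := by
      intro i
      have hc := hchain i
      rw [hg i, hg (i + 1)] at hc
      exact hc
    have hmono : ∀ i, g i + i ≤ g 0 := by
      intro i
      induction i with
      | zero => simp
      | succ i ih => have := hdec i; omega
    have := hmono (g 0 + 1); omega

/-- The extended model. -/
def Mext : GLModel where
  World := M.World ⊕ ℕ
  ne := ⟨.inr 0⟩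
  R := MR M w
  trans := MR_trans M w
  cwf := MR_cwf M w
  val := MV M w

/-- Transfer between M and the copy of M inside Mext. -/
theorem transferA : ∀ (ψ : Formula) (x : M.World),
    KSat (MR M w) (MV M w) ψ (.inl x) ↔ KSat M.R M.val ψ x := by
  intro ψ
  induction ψ with
  | var p => intro x; exact Iff.rfl
  | bot => intro x; exact Iff.rfl
  | imp a b iha ihb =>
    intro x
    constructor
    · intro h ha; exact (ihb x).1 (h ((iha x).2 ha))
    · intro h ha; exact (ihb x).2 (h ((iha x).1 ha))
  | box a iha =>
    intro x
    constructor
    · intro h y hy; exact (iha y).1 (h (.inl y) hy)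
    · intro h w' hw'
      rcases w' with y | n
      · exact (iha y).2 (h y hw')
      · exact hw'.elim

/-- Transfer between w in M and the worlds `inr n` of Mext, for subformulas of φ,
when w is SF(φ)-reflexive. -/
theorem transferB (φ : Formula) (hrefl : M.reflexiveFor w φ.subf) :
    ∀ ψ, ψ ∈ φ.subf → ∀ n : ℕ,
      (KSat (MR M w) (MV M w) ψ (.inr n) ↔ KSat M.R M.val ψ w) := by
  intro ψ
  induction ψ with
  | var p => intro _ n; exact Iff.rfl
  | bot => intro _ n; exact Iff.rfl
  | imp a b iha ihb =>
    intro hm n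
    have hma : a ∈ φ.subf := subf_trans φ (a.imp b) hm (by rw [Formula.subf]; simp [mem_subf_self])
    have hmb : b ∈ φ.subf := subf_trans φ (a.imp b) hm (by rw [Formula.subf]; simp [mem_subf_self])
    constructor
    · intro h ha; exact (ihb hmb n).1 (h ((iha hma n).2 ha))
    · intro h ha; exact (ihb hmb n).2 (h ((iha hma n).1 ha))
  | box a iha =>
    intro hm n
    have hma : a ∈ φ.subf := subf_trans φ (a.box) hm (by rw [Formula.subf]; exact Finset.mem_insert.2 (Or.inr (mem_subf_self a)))
    constructor
    · intro h y hy
      exact (transferA M w a y).1 (h (.inl y) (Or.inr hy))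
    · intro h w' hw'
      rcases w' with y | m
      · rcases hw' with hy | hy
        · rw [hy]
          exact (transferA M w a w).2 (hrefl a hm h)
        · exact (transferA M w a y).2 (h y hy)
      · exact (iha hma m).2 (hrefl a hm h)

/-- Truth at the worlds `inr n` is eventually constant in n. -/
theorem eventuallyConst : ∀ ψ : Formula, ∃ N : ℕ, ∀ n m : ℕ, N ≤ n → N ≤ m →
    (KSat (MR M w) (MV M w) ψ (.inr n) ↔ KSat (MR M w) (MV M w) ψ (.inr m)) := by
  intro ψ
  induction ψ with
  | var p => exact ⟨0, fun _ _ _ _ => Iff.rfl⟩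
  | bot => exact ⟨0, fun _ _ _ _ => Iff.rfl⟩
  | imp a b iha ihb =>
    obtain ⟨Na, ha⟩ := iha
    obtain ⟨Nb, hb⟩ := ihb
    refine ⟨max Na Nb, fun n m hn hm => ?_⟩
    constructor
    · intro h h2
      exact (hb n m (le_trans (le_max_right _ _) hn) (le_trans (le_max_right _ _) hm)).1
        (h ((ha n m (le_trans (le_max_left _ _) hn) (le_trans (le_max_left _ _) hm)).2 h2))
    · intro h h2
      exact (hb n m (le_trans (le_max_right _ _) hn) (le_trans (le_max_right _ _) hm)).2
        (h ((ha n m (le_trans (le_max_left _ _) hn) (le_trans (le_max_left _ _) hm)).1 h2))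
  | box a iha =>
    obtain ⟨N, hN⟩ := iha
    refine ⟨N + 1, fun n m hn hm => ?_⟩
    have aux : ∀ n m : ℕ, N + 1 ≤ n → N + 1 ≤ m →
        KSat (MR M w) (MV M w) (.box a) (.inr n) → KSat (MR M w) (MV M w) (.box a) (.inr m) := by
      intro n m hn hm h w' hw'
      rcases w' with y | k
      · exact h (.inl y) hw'
      · by_cases hk : k < n
        · exact h (.inr k) hk
        · have h1 : KSat (MR M w) (MV M w) a (.inr N) :=
            h (.inr N) (show N < n by omega)
          exact (hN N k (le_refl N) (by omega)).1 h1
    exact ⟨aux n m hn hm, aux m n hm hn⟩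

theorem combineLarge {P : Formula → ℕ → Prop} :
    ∀ Γ : Finset Formula, (∀ x ∈ Γ, ∃ N, ∀ n, N ≤ n → P x n) →
      ∃ N, ∀ x ∈ Γ, ∀ n, N ≤ n → P x n := by
  intro Γ
  induction Γ using Finset.induction with
  | empty => intro _; exact ⟨0, by simp⟩
  | @insert a Γ' _ ih =>
    intro h
    obtain ⟨Na, hNa⟩ := h a (by simp)
    obtain ⟨N', hN'⟩ := ih (fun x hx => h x (by simp [hx]))
    refine ⟨max Na N', fun x hx n hn => ?_⟩
    rcases Finset.mem_insert.1 hx with rfl | hx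
    · exact hNa n (le_trans (le_max_left _ _) hn)
    · exact hN' x hx n (le_trans (le_max_right _ _) hn)

/-- At a large enough world `inr N`, all given reflexivity hypotheses hold. -/
theorem reflLarge (Γ : Finset Formula) (hΓ : ∀ x ∈ Γ, ∃ α, x = (Formula.box α).imp α) :
    ∃ N : ℕ, ∀ x ∈ Γ, KSat (MR M w) (MV M w) x (.inr N) := by
  have key : ∀ x ∈ Γ, ∃ N : ℕ, ∀ n, N ≤ n → KSat (MR M w) (MV M w) x (.inr n) := by
    intro x hx
    obtain ⟨α, rfl⟩ := hΓ x hx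
    obtain ⟨N, hN⟩ := eventuallyConst M w α
    refine ⟨N + 1, fun n hn => ?_⟩
    intro hb
    have h1 : KSat (MR M w) (MV M w) α (.inr N) := hb (.inr N) (show N < n by omega)
    exact (hN N n (le_refl N) (by omega)).1 h1
  obtain ⟨N, hN⟩ := combineLarge Γ key
  exact ⟨N, fun x hx => hN x hx N le_rfl⟩

end Extension

theorem isBox_exists : ∀ {x : Formula}, x.isBox = true → ∃ β, x = Formula.box β := by
  intro x h
  cases x with
  | box β => exact ⟨β, rfl⟩
  | var p => simp [Formula.isBox] at h
  | bot => simp [Formula.isBox] at h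
  | imp a b => simp [Formula.isBox] at h

/-- The theory of a canonical world. -/
def TS (S X : Finset Formula) : Finset Formula :=
  X ∪ (S \ X).image (fun ψ => ψ.imp .bot)

def CWpred (S X : Finset Formula) : Prop := X ⊆ S ∧ ¬ Deriv (TS S X) .bot

def CW (S : Finset Formula) : Type := {X : Finset Formula // CWpred S X}

def CR (S : Finset Formula) (X Y : CW S) : Prop :=
  (∀ β, Formula.box β ∈ X.1 → β ∈ Y.1 ∧ Formula.box β ∈ Y.1) ∧
    ∃ β, Formula.box β ∈ Y.1 ∧ Formula.box β ∉ X.1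

def CV (S : Finset Formula) (X : CW S) (p : ℕ) : Prop := Formula.var p ∈ X.1

theorem memTS {S X : Finset Formula} {ψ} (h : ψ ∈ X) : ψ ∈ TS S X :=
  Finset.mem_union_left _ h

theorem negMemTS {S X : Finset Formula} {ψ} (hS : ψ ∈ S) (hX : ψ ∉ X) :
    ψ.imp .bot ∈ TS S X :=
  Finset.mem_union_right _ (Finset.mem_image.2 ⟨ψ, Finset.mem_sdiff.2 ⟨hS, hX⟩, rfl⟩)

theorem memOfDeriv {S : Finset Formula} (X : CW S) {ψ} (hd : Deriv (TS S X.1) ψ)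
    (hS : ψ ∈ S) : ψ ∈ X.1 := by
  by_contra h
  exact X.2.2 (.mp (.hyp (negMemTS hS h)) hd)

theorem CRtrans (S : Finset Formula) : Transitive (CR S) := by
  rintro X Y Z ⟨h1, β1, hb1, hb1'⟩ ⟨h2, β2, hb2, hb2'⟩
  refine ⟨fun β hb => h2 β (h1 β hb).2, β2, hb2, fun hc => hb2' (h1 β2 hc).2⟩

theorem CRcwf (S : Finset Formula) : ∀ f : ℕ → CW S, ¬ ∀ i, CR S (f i) (f (i + 1)) := by
  intro f hchain
  have hss : ∀ i, (f i).1.filter (fun ψ => ψ.isBox) ⊂ (f (i + 1)).1.filter (fun ψ => ψ.isBox) := by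
    intro i
    rw [Finset.ssubset_def]
    constructor
    · intro z hz
      rcases Finset.mem_filter.1 hz with ⟨hz1, hz2⟩
      obtain ⟨β, rfl⟩ := isBox_exists hz2
      exact Finset.mem_filter.2 ⟨((hchain i).1 β hz1).2, by simp [Formula.isBox]⟩
    · intro hsup
      obtain ⟨β, hb, hb'⟩ := (hchain i).2
      exact hb' (Finset.mem_filter.1
        (hsup (Finset.mem_filter.2 ⟨hb, by simp [Formula.isBox]⟩))).1
  have hcard : ∀ i, ((f i).1.filter (fun ψ => ψ.isBox)).card <
      ((f (i + 1)).1.filter (fun ψ => ψ.isBox)).card := fun i => Finset.card_lt_card (hss i)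
  have hgrow : ∀ i, i ≤ ((f i).1.filter (fun ψ => ψ.isBox)).card := by
    intro i
    induction i with
    | zero => exact Nat.zero_le _
    | succ i ih => have := hcard i; omega
  have hbound : ∀ i, ((f i).1.filter (fun ψ => ψ.isBox)).card ≤ S.card := by
    intro i
    exact Finset.card_le_card (fun z hz => (f i).2.1 (Finset.mem_filter.1 hz).1)
  have h1 := hgrow (S.card + 1)
  have h2 := hbound (S.card + 1)
  omega

/-- Lindenbaum extension over a finite set S. -/
theorem lindenbaum : ∀ (S Γ : Finset Formula), ¬ Deriv Γ .bot →
    ∃ X, X ⊆ S ∧ ¬ Deriv (Γ ∪ TS S X) .bot := by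
  intro S
  induction S using Finset.induction with
  | empty =>
    intro Γ hcon
    refine ⟨∅, Finset.Subset.refl _, ?_⟩
    simpa [TS] using hcon
  | @insert a S ha ih =>
    intro Γ hcon
    by_cases hca : Deriv (insert a Γ) .bot
    · have hna : ¬ Deriv (insert (a.imp .bot) Γ) .bot := by
        intro hd
        exact hcon (Deriv.mp (deductInsert hd) (deductInsert hca))
      obtain ⟨X, hXS, hX⟩ := ih _ hna
      have haX : a ∉ X := fun h => ha (hXS h)
      refine ⟨X, hXS.trans (Finset.subset_insert a S), ?_⟩
      intro hd
      refine hX (hd.mono ?_)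
      intro z hz
      rcases Finset.mem_union.1 hz with hz | hz
      · exact Finset.mem_union_left _ (Finset.mem_insert_of_mem hz)
      · rcases Finset.mem_union.1 hz with hz | hz
        · exact Finset.mem_union_right _ (memTS hz)
        · obtain ⟨ψ, hψ, rfl⟩ := Finset.mem_image.1 hz
          rcases Finset.mem_sdiff.1 hψ with ⟨hψ1, hψ2⟩
          rcases Finset.mem_insert.1 hψ1 with rfl | hψ1
          · exact Finset.mem_union_left _ (Finset.mem_insert_self _ _)
          · exact Finset.mem_union_right _ (negMemTS hψ1 hψ2)
    · obtain ⟨X, hXS, hX⟩ := ih _ hca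
      refine ⟨insert a X, Finset.insert_subset_insert a hXS, ?_⟩
      intro hd
      refine hX (hd.mono ?_)
      intro z hz
      rcases Finset.mem_union.1 hz with hz | hz
      · exact Finset.mem_union_left _ (Finset.mem_insert_of_mem hz)
      · rcases Finset.mem_union.1 hz with hz | hz
        · rcases Finset.mem_insert.1 hz with rfl | hz
          · exact Finset.mem_union_left _ (Finset.mem_insert_self _ _)
          · exact Finset.mem_union_right _ (memTS hz)
        · obtain ⟨ψ, hψ, rfl⟩ := Finset.mem_image.1 hz
          rcases Finset.mem_sdiff.1 hψ with ⟨hψ1, hψ2⟩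
          have hψa : ψ ≠ a := fun he => hψ2 (he ▸ Finset.mem_insert_self a X)
          rcases Finset.mem_insert.1 hψ1 with rfl | hψ1
          · exact absurd rfl hψa
          · exact Finset.mem_union_right _
              (negMemTS hψ1 (fun h => hψ2 (Finset.mem_insert_of_mem h)))

/-- Consistency of the witness set in the box case of the truth lemma. -/
theorem boxCon (S : Finset Formula) (X : CW S) (α : Formula)
    (hnb : Formula.box α ∈ S) (hnX : Formula.box α ∉ X.1) :
    ¬ Deriv (insert (α.imp .bot) (insert (Formula.box α)
      (X.1.filter (fun ψ => ψ.isBox) ∪ (X.1.filter (fun ψ => ψ.isBox)).image Formula.unbox)))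
      .bot := by
  intro hD
  set U := X.1.filter (fun ψ => ψ.isBox) with hU
  set W' := U ∪ U.image Formula.unbox with hW
  have d1 : Deriv (insert (Formula.box α) W') ((α.imp .bot).imp .bot) := deductInsert hD
  have d2 : Deriv (insert (Formula.box α) W') α := .mp (.thm (.ax3 α)) d1
  have d3 : Deriv W' ((Formula.box α).imp α) := deductInsert d2
  have d4 : GLHilbert (impChain W'.toList ((Formula.box α).imp α)) := by
    refine derivImpChain _ _ ?_
    rw [Finset.toList_toFinset]
    exact d3
  have d5 := boxedChain d4
  have d6 : Deriv (TS S X.1) (Formula.box ((Formula.box α).imp α)) := by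
    refine applyChainD _ _ (.thm d5) ?_
    intro x hx
    obtain ⟨y, hy, rfl⟩ := List.mem_map.1 hx
    have hyW : y ∈ W' := Finset.mem_toList.1 hy
    rcases Finset.mem_union.1 hyW with hyU | hyI
    · rcases Finset.mem_filter.1 hyU with ⟨hyX, hyb⟩
      obtain ⟨β, rfl⟩ := isBox_exists hyb
      exact .mp (.thm (fourThm β)) (.hyp (memTS hyX))
    · obtain ⟨z, hz, rfl⟩ := Finset.mem_image.1 hyI
      rcases Finset.mem_filter.1 hz with ⟨hzX, hzb⟩
      obtain ⟨β, rfl⟩ := isBox_exists hzb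
      have : Formula.unbox (Formula.box β) = β := rfl
      rw [this]
      exact .hyp (memTS hzX)
  have d7 : Deriv (TS S X.1) (Formula.box α) := .mp (.thm (.axLob α)) d6
  exact X.2.2 (.mp (.hyp (negMemTS hnb hnX)) d7)

/-- The truth lemma for the canonical model. -/
theorem truthLemma (S : Finset Formula) (Sc : ∀ ψ ∈ S, ψ.subf ⊆ S) :
    ∀ ψ, ψ ∈ S → ∀ X : CW S, (KSat (CR S) (CV S) ψ X ↔ ψ ∈ X.1) := by
  intro ψ
  induction ψ with
  | var p => intro _ X; exact Iff.rfl
  | bot =>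
    intro _ X
    constructor
    · exact False.elim
    · intro h; exact absurd (Deriv.hyp (memTS h) : Deriv (TS S X.1) .bot) X.2.2
  | imp a b iha ihb =>
    intro hS X
    have haS : a ∈ S := Sc _ hS (by rw [Formula.subf]; simp [mem_subf_self])
    have hbS : b ∈ S := Sc _ hS (by rw [Formula.subf]; simp [mem_subf_self])
    constructor
    · intro h
      by_cases haX : a ∈ X.1
      · have hb : b ∈ X.1 := (ihb hbS X).1 (h ((iha haS X).2 haX))
        have hd : Deriv (TS S X.1) (a.imp b) := .mp (.thm (.ax1 b a)) (.hyp (memTS hb))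
        exact memOfDeriv X hd hS
      · have h1 : Deriv (insert a (TS S X.1)) Formula.bot :=
          .mp (.hyp (Finset.mem_insert_of_mem (negMemTS haS haX)))
            (.hyp (Finset.mem_insert_self a _))
        have hd : Deriv (TS S X.1) (a.imp b) := deductInsert (derivEfq h1)
        exact memOfDeriv X hd hS
    · intro hmem ha
      have haX : a ∈ X.1 := (iha haS X).1 ha
      have hd : Deriv (TS S X.1) b := .mp (.hyp (memTS hmem)) (.hyp (memTS haX))
      exact (ihb hbS X).2 (memOfDeriv X hd hbS)
  | box a iha =>
    intro hS X
    have haS : a ∈ S := Sc _ hS (by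
      rw [Formula.subf]; exact Finset.mem_insert.2 (Or.inr (mem_subf_self a)))
    constructor
    · intro h
      by_contra hnX
      set U := X.1.filter (fun ψ => ψ.isBox) with hU
      set W' := U ∪ U.image Formula.unbox with hW
      set hyps := insert (a.imp .bot) (insert (Formula.box a) W') with hh
      obtain ⟨Y, hYS, hY⟩ := lindenbaum S hyps (boxCon S X a hS hnX)
      have hYcon : ¬ Deriv (TS S Y) .bot := fun hd => hY (hd.mono Finset.subset_union_right)
      have memY : ∀ ψ, ψ ∈ hyps → ψ ∈ S → ψ ∈ Y := by
        intro ψ hψ hψS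
        by_contra hn
        exact hY (.mp
          (.hyp (Finset.mem_union_right _ (negMemTS hψS hn)))
          (.hyp (Finset.mem_union_left _ hψ)))
      have hanotY : a ∉ Y := by
        intro haY
        refine hY (.mp (.hyp ?_) (.hyp (Finset.mem_union_right _ (memTS haY))))
        exact Finset.mem_union_left _ (by rw [hh]; exact Finset.mem_insert_self _ _)
      have hR : CR S X ⟨Y, hYS, hYcon⟩ := by
        constructor
        · intro β hbX
          have hbS' : Formula.box β ∈ S := X.2.1 hbX
          have hβS : β ∈ S := Sc _ hbS' (by
            rw [Formula.subf]; exact Finset.mem_insert.2 (Or.inr (mem_subf_self β)))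
          have hβU : Formula.box β ∈ U := Finset.mem_filter.2 ⟨hbX, by simp [Formula.isBox]⟩
          have h1 : Formula.box β ∈ hyps := by
            rw [hh]
            exact Finset.mem_insert_of_mem (Finset.mem_insert_of_mem
              (Finset.mem_union_left _ hβU))
          have h2 : β ∈ hyps := by
            rw [hh]
            refine Finset.mem_insert_of_mem (Finset.mem_insert_of_mem
              (Finset.mem_union_right _ ?_))
            exact Finset.mem_image.2 ⟨Formula.box β, hβU, rfl⟩
          exact ⟨memY β h2 hβS, memY _ h1 hbS'⟩
        · refine ⟨a, memY (Formula.box a) ?_ hS, hnX⟩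
          rw [hh]
          exact Finset.mem_insert_of_mem (Finset.mem_insert_self _ _)
      exact hanotY ((iha haS ⟨Y, hYS, hYcon⟩).1 (h ⟨Y, hYS, hYcon⟩ hR))
    · intro hmem Y hR
      exact (iha haS Y).2 ((hR.1 a hmem).1)

/-- Backward direction of C0. -/
theorem backwardDir {φ : Formula}
    (h : ∀ (M : GLModel) (w : M.World), M.reflexiveFor w φ.subf → M.sat w φ) :
    GLSHilbert φ := by
  classical
  set R0s : Finset Formula :=
    (φ.subf.filter (fun ψ => ψ.isBox)).image (fun b => b.imp b.unbox) with hR0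
  set Γ0 : Finset Formula := insert (φ.imp .bot) R0s with hΓ0
  by_cases hcon : Deriv Γ0 .bot
  · have d1 : Deriv R0s ((φ.imp .bot).imp .bot) := deductInsert hcon
    have hgls : GLSHilbert ((φ.imp .bot).imp .bot) := by
      refine glsOfDeriv d1 ?_
      intro x hx
      obtain ⟨b, hb, rfl⟩ := Finset.mem_image.1 hx
      rcases Finset.mem_filter.1 hb with ⟨_, hbb⟩
      obtain ⟨β, rfl⟩ := isBox_exists hbb
      exact GLSHilbert.refl β
    exact .mp (.gl (.ax3 φ)) hgls
  · exfalso
    set S := Γ0.biUnion Formula.subf with hSdef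
    have Sc : ∀ ψ ∈ S, ψ.subf ⊆ S := by
      intro ψ hψ
      obtain ⟨γ, hγ, hψγ⟩ := Finset.mem_biUnion.1 hψ
      exact fun z hz => Finset.mem_biUnion.2 ⟨γ, hγ, subf_trans γ ψ hψγ hz⟩
    obtain ⟨X, hXS, hX⟩ := lindenbaum S Γ0 hcon
    have hXcon : ¬ Deriv (TS S X) .bot := fun hd => hX (hd.mono Finset.subset_union_right)
    have hΓ0S : ∀ γ ∈ Γ0, γ ∈ S := fun γ hγ => Finset.mem_biUnion.2 ⟨γ, hγ, mem_subf_self γ⟩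
    have memX : ∀ γ ∈ Γ0, γ ∈ X := by
      intro γ hγ
      by_contra hn
      exact hX (.mp (.hyp (Finset.mem_union_right _ (negMemTS (hΓ0S γ hγ) hn)))
        (.hyp (Finset.mem_union_left _ hγ)))
    have hφS : φ.subf ⊆ S := by
      intro z hz
      refine Finset.mem_biUnion.2 ⟨φ.imp .bot, by rw [hΓ0]; exact Finset.mem_insert_self _ _, ?_⟩
      rw [Formula.subf]
      exact Finset.mem_insert.2 (Or.inr (Finset.mem_union.2 (Or.inl hz)))
    let Xw : CW S := ⟨X, hXS, hXcon⟩
    let M : GLModel :=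
      ⟨CW S, ⟨Xw⟩, CR S, CRtrans S, CRcwf S, CV S⟩
    have hrefl : M.reflexiveFor Xw φ.subf := by
      intro α hα
      intro hbox
      have h1 : Formula.box α ∈ X := (truthLemma S Sc (Formula.box α) (hφS hα) Xw).1 hbox
      have h2 : (Formula.box α).imp α ∈ Γ0 := by
        rw [hΓ0]
        refine Finset.mem_insert_of_mem ?_
        rw [hR0]
        exact Finset.mem_image.2 ⟨Formula.box α,
          Finset.mem_filter.2 ⟨hα, by simp [Formula.isBox]⟩, rfl⟩
      have h3 : (Formula.box α).imp α ∈ X := memX _ h2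
      have hαS : α ∈ S := Sc _ (hφS hα) (by
        rw [Formula.subf]; exact Finset.mem_insert.2 (Or.inr (mem_subf_self α)))
      have hd : Deriv (TS S X) α := .mp (.hyp (memTS h3)) (.hyp (memTS h1))
      exact (truthLemma S Sc α hαS Xw).2 (memOfDeriv Xw hd hαS)
    have hsat := h M Xw hrefl
    have hφX : φ ∈ X := (truthLemma S Sc φ (hφS (mem_subf_self φ)) Xw).1 hsat
    have hnegX : φ.imp .bot ∈ X := memX _ (by rw [hΓ0]; exact Finset.mem_insert_self _ _)
    exact hXcon (.mp (.hyp (memTS hnegX)) (.hyp (memTS hφX)))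

/-- Forward direction of C0. -/
theorem forwardDir {φ : Formula} (h : GLSHilbert φ) (M : GLModel) (w : M.World)
    (hrefl : M.reflexiveFor w φ.subf) : M.sat w φ := by
  obtain ⟨Γ, hΓ, hd⟩ := glsExtract h
  obtain ⟨N, hN⟩ := reflLarge M w Γ hΓ
  have hsat : (Mext M w).sat (.inr N) φ :=
    derivSound hd (Mext M w) (.inr N) (fun γ hγ => hN γ hγ)
  exact (transferB M w φ hrefl φ (mem_subf_self φ) N).1 hsat

end C0proof

/-- Characterization C0: φ is a theorem of GLS iff φ is true at every SF(φ)-reflexive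
world of every GL-model. -/
theorem gls_characterization_c0 (φ : Formula) :
    GLSHilbert φ ↔
      ∀ (M : GLModel) (w : M.World), M.reflexiveFor w φ.subf → M.sat w φ := by
  exact ⟨fun h M w hrefl => C0proof.forwardDir h M w hrefl,
    fun h => C0proof.backwardDir h⟩
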